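/- Let ω : [0,∞) → [0,∞) be a continuous strictly increasing function with ω(0) = 0 whose range contains [0,1], and let ω^{-1} denote its inverse function. Define Λ(t) = −∫_{1/t}^1 ln(ω^{-1}(s)) ds for t ≥ 1. Then for every t ∈ (0,1] one has Λ(1/t) = ∫_{ω^{-1}(t)}^{ω^{-1}(1)} (ω(s)/s) ds − ln ω^{-1}(1) + t ln ω^{-1}(t). -/

import Mathlib

set_option maxHeartbeats 1000000


open MeasureTheory Set
noncomputable section

/-- the integration-by-parts identity
Λ(1/t) = ∫_{ω⁻¹(t)}^{ω⁻¹(1)} ω(s)/s ds − ln ω⁻¹(1) + t ln ω⁻¹(t), where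
Λ(T) = −∫_{1/T}^1 ln(ω⁻¹(s)) ds, for a continuous strictly increasing ω with ω(0)=0
whose range contains [0,1]. -/
theorem lambda_integration_by_parts
    (ω ωinv : ℝ → ℝ)
    (hωc : ContinuousOn ω (Ici 0))
    (hωmono : StrictMonoOn ω (Ici 0))
    (hω0 : ω 0 = 0)
    (hrange : Icc (0 : ℝ) 1 ⊆ ω '' Ici 0)
    (hinv₁ : ∀ t ∈ Ici (0 : ℝ), ω t ∈ Icc (0 : ℝ) 1 → ωinv (ω t) = t)
    (hinv₂ : ∀ s ∈ Icc (0 : ℝ) 1, ωinv s ∈ Ici (0 : ℝ) ∧ ω (ωinv s) = s) :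
    ∀ t ∈ Ioc (0 : ℝ) 1,
      (-∫ s in Ioc t 1, Real.log (ωinv s)) =
        (∫ s in Ioc (ωinv t) (ωinv 1), ω s / s)
          - Real.log (ωinv 1) + t * Real.log (ωinv t) := by
  rintro t ⟨ht0, ht1⟩
  set a := ωinv t with ha_def
  set b := ωinv 1 with hb_def
  obtain ⟨ha0', hωa⟩ := hinv₂ t ⟨ht0.le, ht1⟩
  obtain ⟨hb0', hωb⟩ := hinv₂ 1 ⟨zero_le_one, le_refl 1⟩
  have ha0 : 0 < a := by
    rcases eq_or_lt_of_le (mem_Ici.1 ha0') with h | h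
    · exfalso
      have h' : ωinv t = 0 := h.symm
      have : t = 0 := by rw [← hωa, h', hω0]
      linarith
    · exact h
  have hb0 : 0 < b := by
    rcases eq_or_lt_of_le (mem_Ici.1 hb0') with h | h
    · exfalso
      have h' : ωinv 1 = 0 := h.symm
      have : (1:ℝ) = 0 := by rw [← hωb, h', hω0]
      linarith
    · exact h
  have hab : a ≤ b := by
    rw [← hωmono.le_iff_le ha0' hb0']; rw [hωa, hωb]; exact ht1
  -- inverse basic facts on Ioc t 1
  have hinvmem : ∀ s ∈ Ioc t 1, 0 ≤ ωinv s ∧ ω (ωinv s) = s ∧ a ≤ ωinv s ∧ ωinv s ≤ b := by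
    rintro s ⟨hs1, hs2⟩
    obtain ⟨h1, h2⟩ := hinv₂ s ⟨(ht0.trans hs1).le, hs2⟩
    refine ⟨h1, h2, ?_, ?_⟩
    · rw [← hωmono.le_iff_le ha0' h1, hωa, h2]; exact hs1.le
    · rw [← hωmono.le_iff_le h1 hb0', h2, hωb]; exact hs2
  -- continuous extension of ω
  set ωt : ℝ → ℝ := fun u => ω (max u 0) with hωt_def
  have hωt_cont : Continuous ωt :=
    hωc.comp_continuous (continuous_id.max continuous_const)
      (fun x => mem_Ici.2 (le_max_right _ _))
  have hωt_eq : ∀ u : ℝ, 0 ≤ u → ωt u = ω u := by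
    intro u hu; simp [hωt_def, max_eq_left hu]
  -- the region
  set S : Set (ℝ × ℝ) := {p | t < p.1 ∧ p.1 ≤ 1 ∧ a < p.2 ∧ ωt p.2 ≤ p.1} with hS_def
  have hS_meas : MeasurableSet S := by
    have h1 : MeasurableSet {p : ℝ × ℝ | t < p.1} :=
      measurableSet_lt measurable_const measurable_fst
    have h2 : MeasurableSet {p : ℝ × ℝ | p.1 ≤ 1} :=
      measurableSet_le measurable_fst measurable_const
    have h3 : MeasurableSet {p : ℝ × ℝ | a < p.2} :=
      measurableSet_lt measurable_const measurable_snd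
    have h4 : MeasurableSet {p : ℝ × ℝ | ωt p.2 ≤ p.1} :=
      measurableSet_le ((hωt_cont.comp continuous_snd).measurable) measurable_fst
    have : S = ({p : ℝ × ℝ | t < p.1} ∩ {p | p.1 ≤ 1}) ∩ ({p | a < p.2} ∩ {p | ωt p.2 ≤ p.1}) := by
      ext p; simp only [hS_def, mem_setOf_eq, mem_inter_iff]; tauto
    rw [this]; exact ((h1.inter h2).inter (h3.inter h4))
  set F : ℝ × ℝ → ℝ := S.indicator (fun p => p.2⁻¹) with hF_def
  -- membership characterizations
  have hmemS : ∀ p : ℝ × ℝ, p ∈ S ↔ (t < p.1 ∧ p.1 ≤ 1 ∧ a < p.2 ∧ ω p.2 ≤ p.1) := by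
    rintro ⟨s, u⟩
    simp only [hS_def, mem_setOf_eq]
    constructor
    · rintro ⟨h1, h2, h3, h4⟩
      rw [hωt_eq u (ha0.trans h3).le] at h4; exact ⟨h1, h2, h3, h4⟩
    · rintro ⟨h1, h2, h3, h4⟩
      rw [← hωt_eq u (ha0.trans h3).le] at h4; exact ⟨h1, h2, h3, h4⟩
  -- slice in u for fixed s
  have hslice1 : ∀ s ∈ Ioc t 1, ∀ u : ℝ, ((s, u) ∈ S ↔ u ∈ Ioc a (ωinv s)) := by
    rintro s hs u
    obtain ⟨hi0, hiω, hia, hib⟩ := hinvmem s hs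
    rw [hmemS]
    constructor
    · rintro ⟨h1, h2, h3, h4⟩
      refine ⟨h3, ?_⟩
      rw [← hωmono.le_iff_le (mem_Ici.2 (ha0.trans h3).le) (mem_Ici.2 hi0), hiω]
      exact h4
    · rintro ⟨h1, h2⟩
      refine ⟨hs.1, hs.2, h1, ?_⟩
      calc ω u ≤ ω (ωinv s) := (hωmono.le_iff_le (mem_Ici.2 (ha0.trans h1).le) (mem_Ici.2 hi0)).2 h2
        _ = s := hiω
  have hslice1' : ∀ s : ℝ, s ∉ Ioc t 1 → ∀ u : ℝ, (s, u) ∉ S := by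
    intro s hs u hmem
    rw [hmemS] at hmem
    exact hs ⟨hmem.1, hmem.2.1⟩
  -- slice in s for fixed u
  have hslice2 : ∀ u ∈ Ioc a b, ∀ s : ℝ, ((s, u) ∈ S ↔ s ∈ Icc (ω u) 1) := by
    rintro u ⟨hu1, hu2⟩ s
    have hu0 : (0:ℝ) ≤ u := (ha0.trans hu1).le
    have htωu : t < ω u := by
      calc t = ω a := hωa.symm
        _ < ω u := hωmono ha0' (mem_Ici.2 hu0) hu1
    rw [hmemS]
    constructor
    · rintro ⟨h1, h2, h3, h4⟩; exact ⟨h4, h2⟩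
    · rintro ⟨h1, h2⟩; exact ⟨htωu.trans_le h1, h2, hu1, h1⟩
  have hslice2' : ∀ u : ℝ, u ∉ Ioc a b → ∀ s : ℝ, (s, u) ∉ S := by
    intro u hu s hmem
    rw [hmemS] at hmem
    obtain ⟨h1, h2, h3, h4⟩ := hmem
    apply hu
    refine ⟨h3, ?_⟩
    rw [← hωmono.le_iff_le (mem_Ici.2 (ha0.trans h3).le) hb0', hωb]
    exact h4.trans h2
  -- integrability of F
  have hF_meas : Measurable F := (measurable_snd.inv).indicator hS_meas
  have hF_int : Integrable F ((volume : Measure ℝ).prod volume) := by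
    have hbox : MeasurableSet (Ioc t 1 ×ˢ Ioc a b : Set (ℝ × ℝ)) :=
      measurableSet_Ioc.prod measurableSet_Ioc
    refine Integrable.mono' (g := (Ioc t 1 ×ˢ Ioc a b : Set (ℝ × ℝ)).indicator (fun _ => a⁻¹))
      ?_ (hF_meas.aestronglyMeasurable) ?_
    · rw [integrable_indicator_iff hbox]
      refine integrableOn_const (lt_top_iff_ne_top.1 ?_)
      rw [Measure.prod_prod, Real.volume_Ioc, Real.volume_Ioc]
      exact ENNReal.mul_lt_top ENNReal.ofReal_lt_top ENNReal.ofReal_lt_top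
    · refine Filter.Eventually.of_forall (fun p => ?_)
      by_cases hp : p ∈ S
      · have hmem := (hmemS p).1 hp
        have hpbox : p ∈ (Ioc t 1 ×ˢ Ioc a b : Set (ℝ × ℝ)) := by
          refine ⟨⟨hmem.1, hmem.2.1⟩, hmem.2.2.1, ?_⟩
          rw [← hωmono.le_iff_le (mem_Ici.2 (ha0.trans hmem.2.2.1).le) hb0', hωb]
          exact hmem.2.2.2.trans hmem.2.1
        rw [hF_def, indicator_of_mem hp, indicator_of_mem hpbox]
        have hp2 : 0 < p.2 := ha0.trans hmem.2.2.1
        rw [Real.norm_eq_abs, abs_of_pos (inv_pos.2 hp2)]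
        exact inv_anti₀ ha0 hmem.2.2.1.le
      · rw [hF_def, indicator_of_notMem hp, norm_zero]
        exact indicator_nonneg (fun _ _ => inv_nonneg.2 ha0.le) _
  -- inner integral in u
  have hinner1 : ∀ s : ℝ, (∫ u : ℝ, F (s, u)) =
      (Ioc t 1).indicator (fun s => Real.log (ωinv s) - Real.log a) s := by
    intro s
    by_cases hs : s ∈ Ioc t 1
    · rw [indicator_of_mem hs]
      obtain ⟨hi0, hiω, hia, hib⟩ := hinvmem s hs
      have hi0' : 0 < ωinv s := ha0.trans_le hia
      have hF_eq : (fun u : ℝ => F (s, u)) = (Ioc a (ωinv s)).indicator (fun u => u⁻¹) := by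
        funext u
        rw [hF_def]
        by_cases hu : (s, u) ∈ S
        · rw [indicator_of_mem hu, indicator_of_mem ((hslice1 s hs u).1 hu)]
        · rw [indicator_of_notMem hu,
            indicator_of_notMem (fun h => hu ((hslice1 s hs u).2 h))]
      rw [hF_eq, integral_indicator measurableSet_Ioc,
        ← intervalIntegral.integral_of_le hia, integral_inv_of_pos ha0 hi0',
        Real.log_div hi0'.ne' ha0.ne']
    · rw [indicator_of_notMem hs]
      have hF_eq : (fun u : ℝ => F (s, u)) = fun _ => (0:ℝ) := by
        funext u
        rw [hF_def, indicator_of_notMem (hslice1' s hs u)]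
      rw [hF_eq, integral_zero]
  -- inner integral in s
  have hinner2 : ∀ u : ℝ, (∫ s : ℝ, F (s, u)) =
      (Ioc a b).indicator (fun u => (1 - ω u) * u⁻¹) u := by
    intro u
    by_cases hu : u ∈ Ioc a b
    · rw [indicator_of_mem hu]
      have hωu1 : ω u ≤ 1 := by
        rw [← hωb, hωmono.le_iff_le (mem_Ici.2 (ha0.trans hu.1).le) hb0']
        exact hu.2
      have hF_eq : (fun s : ℝ => F (s, u)) = (Icc (ω u) 1).indicator (fun _ => u⁻¹) := by
        funext s
        rw [hF_def]
        by_cases hsu : (s, u) ∈ S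
        · rw [indicator_of_mem hsu, indicator_of_mem ((hslice2 u hu s).1 hsu)]
        · rw [indicator_of_notMem hsu,
            indicator_of_notMem (fun h => hsu ((hslice2 u hu s).2 h))]
      rw [hF_eq, integral_indicator measurableSet_Icc, setIntegral_const,
        measureReal_def, Real.volume_Icc, smul_eq_mul, ENNReal.toReal_ofReal (by linarith)]
    · rw [indicator_of_notMem hu]
      have hF_eq : (fun s : ℝ => F (s, u)) = fun _ => (0:ℝ) := by
        funext s
        rw [hF_def, indicator_of_notMem (hslice2' u hu s)]
      rw [hF_eq, integral_zero]
  -- Fubini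
  have hswap : (∫ s : ℝ, ∫ u : ℝ, F (s, u)) = ∫ u : ℝ, ∫ s : ℝ, F (s, u) := by
    have : Function.uncurry (fun s u => F (s, u)) = F := by
      funext p; rfl
    exact integral_integral_swap (this ▸ hF_int)
  -- evaluate LHS of Fubini
  have hLHS : (∫ s : ℝ, ∫ u : ℝ, F (s, u)) =
      ∫ s in Ioc t 1, (Real.log (ωinv s) - Real.log a) := by
    calc (∫ s : ℝ, ∫ u : ℝ, F (s, u))
        = ∫ s : ℝ, (Ioc t 1).indicator (fun s => Real.log (ωinv s) - Real.log a) s := by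
          exact integral_congr_ae (Filter.Eventually.of_forall hinner1)
      _ = ∫ s in Ioc t 1, (Real.log (ωinv s) - Real.log a) :=
          integral_indicator measurableSet_Ioc
  -- integrability of log ∘ ωinv on Ioc t 1
  have hg_int : Integrable (fun s : ℝ => ∫ u : ℝ, F (s, u)) volume :=
    hF_int.integral_prod_left
  have hlog_sub_int : IntegrableOn (fun s => Real.log (ωinv s) - Real.log a) (Ioc t 1) := by
    rw [← integrable_indicator_iff measurableSet_Ioc]
    have : (Ioc t 1).indicator (fun s => Real.log (ωinv s) - Real.log a)
        = fun s : ℝ => ∫ u : ℝ, F (s, u) := by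
      funext s; rw [hinner1]
    rw [this]; exact hg_int
  have hIoc_fin : volume (Ioc t 1) < ⊤ := by
    rw [Real.volume_Ioc]; exact ENNReal.ofReal_lt_top
  have hconst_int : IntegrableOn (fun _ : ℝ => Real.log a) (Ioc t 1) :=
    integrableOn_const hIoc_fin.ne
  have hlog_int : IntegrableOn (fun s => Real.log (ωinv s)) (Ioc t 1) := by
    have h2 : (fun s : ℝ => Real.log (ωinv s))
        = fun s : ℝ => (Real.log (ωinv s) - Real.log a) + Real.log a := by
      funext s; ring
    rw [h2]; exact hlog_sub_int.add hconst_int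
  -- evaluate RHS of Fubini
  have hinv_cont : ContinuousOn (fun u : ℝ => u⁻¹) (Icc a b) :=
    ContinuousOn.inv₀ continuousOn_id (fun x hx => (ha0.trans_le hx.1).ne')
  have hinv_intOn : IntegrableOn (fun u : ℝ => u⁻¹) (Ioc a b) :=
    (hinv_cont.integrableOn_Icc).mono_set Ioc_subset_Icc_self
  have hωinv_intOn : IntegrableOn (fun u : ℝ => ω u * u⁻¹) (Ioc a b) := by
    have h1 : IntegrableOn (fun u : ℝ => ωt u * u⁻¹) (Ioc a b) :=
      (((hωt_cont.continuousOn).mul hinv_cont).integrableOn_Icc).mono_set Ioc_subset_Icc_self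
    exact h1.congr_fun (fun u hu => by beta_reduce; rw [hωt_eq u (ha0.trans hu.1).le]) measurableSet_Ioc
  have hRHS : (∫ u : ℝ, ∫ s : ℝ, F (s, u)) =
      (Real.log b - Real.log a) - ∫ u in Ioc a b, ω u * u⁻¹ := by
    calc (∫ u : ℝ, ∫ s : ℝ, F (s, u))
        = ∫ u : ℝ, (Ioc a b).indicator (fun u => (1 - ω u) * u⁻¹) u :=
          integral_congr_ae (Filter.Eventually.of_forall hinner2)
      _ = ∫ u in Ioc a b, (1 - ω u) * u⁻¹ := integral_indicator measurableSet_Ioc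
      _ = ∫ u in Ioc a b, (u⁻¹ - ω u * u⁻¹) := by
          refine setIntegral_congr_fun measurableSet_Ioc (fun u hu => ?_)
          ring
      _ = (∫ u in Ioc a b, u⁻¹) - ∫ u in Ioc a b, ω u * u⁻¹ :=
          integral_sub hinv_intOn hωinv_intOn
      _ = (Real.log b - Real.log a) - ∫ u in Ioc a b, ω u * u⁻¹ := by
          rw [← intervalIntegral.integral_of_le hab, integral_inv_of_pos ha0 hb0,
            Real.log_div hb0.ne' ha0.ne']
  -- put everything together
  have hsplit : (∫ s in Ioc t 1, (Real.log (ωinv s) - Real.log a)) =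
      (∫ s in Ioc t 1, Real.log (ωinv s)) - (1 - t) * Real.log a := by
    rw [integral_sub hlog_int hconst_int]
    rw [setIntegral_const, measureReal_def, Real.volume_Ioc, smul_eq_mul, ENNReal.toReal_ofReal (by linarith)]
  have hgoal_int : (∫ s in Ioc (ωinv t) (ωinv 1), ω s / s) = ∫ u in Ioc a b, ω u * u⁻¹ := by
    rw [← ha_def, ← hb_def]
    refine setIntegral_congr_fun measurableSet_Ioc (fun u hu => ?_)
    rw [div_eq_mul_inv]
  rw [hgoal_int]
  have key : (∫ s in Ioc t 1, Real.log (ωinv s)) - (1 - t) * Real.log a =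
      (Real.log b - Real.log a) - ∫ u in Ioc a b, ω u * u⁻¹ := by
    rw [← hsplit, ← hLHS, hswap, hRHS]
  linarith [key]
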